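/- arXiv:1702.03062 — 2 statements merged into one kernel-verified Lean document; each statement's English description precedes it below -/
import Mathlib

section
/- Define Q_sb(ℓ,m,M) = 1 − 2^{−(M−ℓ−1)} Σ_{j=0}^{M−m−1} C(M−ℓ−1, j), and for M/2 < m < M let ℓ*_sb(m,M) be the largest integer ℓ with Q_sb(ℓ,m,M) ≥ 1/2. Then there is an absolute constant C such that for all sufficiently large M and all integers m with M/2 < m < M, |ℓ*_sb(m,M) − (2m − M)| ≤ C. In particular, if m = m(M) satisfies m/M → δ ∈ (1/2, 1) as M → ∞, then ℓ*_sb(m,M)/M = (2m/M − 1) + O(1/M) → 2δ − 1. -/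
open scoped BigOperators
open Filter

/-- `Q_sb(ℓ,m,M) = 1 − 2^{−(M−ℓ−1)} Σ_{j=0}^{M−m−1} C(M−ℓ−1, j)`. -/
noncomputable def Qsb (ℓ m M : ℕ) : ℝ :=
  1 - (2:ℝ) ^ (-((M:ℤ) - ℓ - 1)) * ∑ j ∈ Finset.range (M - m), ((M - ℓ - 1).choose j : ℝ)

lemma sbpt_reflect (n k : ℕ) (hk : k ≤ n + 1) :
    ∑ j ∈ Finset.Ico k (n+1), n.choose j = ∑ j ∈ Finset.range (n+1-k), n.choose j := by
  refine Finset.sum_nbij' (fun j => n - j) (fun j => n - j) ?_ ?_ ?_ ?_ ?_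
  all_goals intro a ha <;> simp [Finset.mem_Ico, Finset.mem_range] at * <;> try omega
  exact (Nat.choose_symm (by omega)).symm

lemma sbpt_split (n k : ℕ) (hk : k ≤ n + 1) :
    ∑ j ∈ Finset.range k, n.choose j + ∑ j ∈ Finset.range (n+1-k), n.choose j = 2 ^ n := by
  rw [← sbpt_reflect n k hk, Finset.sum_range_add_sum_Ico _ hk, Nat.sum_range_choose]

lemma sbpt_mono_sum (n a b : ℕ) (h : a ≤ b) :
    ∑ j ∈ Finset.range a, n.choose j ≤ ∑ j ∈ Finset.range b, n.choose j :=
  Finset.sum_le_sum_of_subset (Finset.range_subset_range.2 h)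

lemma sbpt_two_sum_le (n k : ℕ) (h : 2 * k ≤ n + 1) :
    2 * ∑ j ∈ Finset.range k, n.choose j ≤ 2 ^ n := by
  have := sbpt_split n k (by omega)
  have := sbpt_mono_sum n k (n+1-k) (by omega)
  omega

lemma sbpt_two_sum_gt (n k : ℕ) (h : n + 1 < 2 * k) :
    2 ^ n < 2 * ∑ j ∈ Finset.range k, n.choose j := by
  rcases le_or_gt k (n+1) with hk | hk
  · have hs := sbpt_split n k hk
    have h1 : ∑ j ∈ Finset.range (n+1-k), n.choose j + n.choose (n+1-k)
        ≤ ∑ j ∈ Finset.range k, n.choose j := by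
      have := Finset.sum_range_succ (fun j => n.choose j) (n+1-k)
      have := sbpt_mono_sum n (n+1-k+1) k (by omega)
      omega
    have h2 : 1 ≤ n.choose (n+1-k) := Nat.choose_pos (by omega)
    omega
  · have heq : ∑ j ∈ Finset.range k, n.choose j = 2 ^ n := by
      rw [← Nat.sum_range_choose n]
      symm
      apply Finset.sum_subset (Finset.range_subset_range.2 (by omega))
      intro x hx hx2
      simp [Finset.mem_range] at *
      exact Nat.choose_eq_zero_of_lt (by omega)
    have : 0 < 2^n := Nat.pow_pos (n := n) (by norm_num)
    omega

lemma sbpt_qsb_iff (M m ℓ : ℕ) (h1 : M < 2 * m) (h2 : m < M) :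
    (1:ℝ)/2 ≤ Qsb ℓ m M ↔ ℓ ≤ 2 * m - M := by
  unfold Qsb
  rcases lt_or_ge ℓ M with hℓ | hℓ
  · set n := M - ℓ - 1 with hn
    have he : -((M:ℤ) - ℓ - 1) = -(n:ℤ) := by push_cast; omega
    rw [he, zpow_neg, zpow_natCast]
    have hS : ∑ j ∈ Finset.range (M - m), ((M - ℓ - 1).choose j : ℝ)
        = ((∑ j ∈ Finset.range (M - m), n.choose j : ℕ) : ℝ) := by push_cast; rfl
    rw [hS]
    set S : ℕ := ∑ j ∈ Finset.range (M - m), n.choose j with hSdef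
    have hpow : (0:ℝ) < 2 ^ n := by positivity
    have step1 : (1:ℝ)/2 ≤ 1 - ((2:ℝ)^n)⁻¹ * S ↔ ((2:ℝ)^n)⁻¹ * S ≤ 1/2 := by
      constructor <;> intro <;> linarith
    rw [step1, inv_mul_le_iff₀ hpow]
    have step2 : ((S:ℝ) ≤ 2^n * (1/2)) ↔ (2*S ≤ 2^n) := by
      rw [← Nat.cast_le (α := ℝ)]
      push_cast
      constructor <;> intro <;> linarith
    rw [step2]
    constructor
    · intro h
      by_contra hc
      push_neg at hc
      have := sbpt_two_sum_gt n (M-m) (by omega)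
      omega
    · intro h
      exact sbpt_two_sum_le n (M-m) (by omega)
  · have hfalse : ¬ (ℓ ≤ 2 * m - M) := by omega
    simp only [hfalse, iff_false]
    have hz : M - ℓ - 1 = 0 := by omega
    rw [hz]
    have hsum : ∑ j ∈ Finset.range (M - m), ((Nat.choose 0 j : ℕ) : ℝ) = 1 := by
      rw [show M - m = M-m-1+1 from by omega, Finset.sum_range_succ']
      simp
    rw [hsum, mul_one]
    have hexp : (1:ℤ) ≤ -((M:ℤ) - ℓ - 1) := by omega
    have : (2:ℝ)^(1:ℤ) ≤ (2:ℝ) ^ (-((M:ℤ) - ℓ - 1)) :=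
      zpow_le_zpow_right₀ (by norm_num) hexp
    simp only [zpow_one] at this
    intro hcon
    linarith

lemma sbpt_greatest_eq (M m L : ℕ) (h1 : M < 2 * m) (h2 : m < M)
    (hG : IsGreatest {ℓ : ℕ | (1:ℝ)/2 ≤ Qsb ℓ m M} L) : L = 2 * m - M := by
  have ha : L ≤ 2 * m - M := (sbpt_qsb_iff M m L h1 h2).1 hG.1
  have hb : 2 * m - M ≤ L := hG.2 ((sbpt_qsb_iff M m (2*m-M) h1 h2).2 le_rfl)
  omega

/-- The single-block finite-N phase transition `ℓ*_sb(m,M)` — the largest `ℓ` with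
`Q_sb(ℓ,m,M) ≥ 1/2` — satisfies `|ℓ*_sb(m,M) − (2m − M)| ≤ C` for an absolute constant `C`,
for all sufficiently large `M` and all `M/2 < m < M`; in particular if `m/M → δ ∈ (1/2,1)`
then `ℓ*_sb(m,M)/M → 2δ − 1`. -/
theorem single_block_phase_transition_location :
    (∃ C : ℝ, ∃ M0 : ℕ, ∀ M : ℕ, M0 ≤ M → ∀ m : ℕ, M < 2 * m → m < M →
      ∀ L : ℕ, IsGreatest {ℓ : ℕ | (1:ℝ)/2 ≤ Qsb ℓ m M} L →
        |(L : ℝ) - (2 * (m:ℝ) - M)| ≤ C) ∧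
    (∀ δ : ℝ, δ ∈ Set.Ioo (1/2 : ℝ) 1 →
      ∀ m : ℕ → ℕ,
        Tendsto (fun M : ℕ => (m M : ℝ) / M) atTop (nhds δ) →
        (∀ᶠ M : ℕ in atTop, M < 2 * m M ∧ m M < M) →
        ∀ L : ℕ → ℕ,
          (∀ᶠ M : ℕ in atTop, IsGreatest {ℓ : ℕ | (1:ℝ)/2 ≤ Qsb ℓ (m M) M} (L M)) →
          Tendsto (fun M : ℕ => (L M : ℝ) / M) atTop (nhds (2 * δ - 1))) := by
  have cast_eq : ∀ M m L : ℕ, M < 2 * m → m < M →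
      IsGreatest {ℓ : ℕ | (1:ℝ)/2 ≤ Qsb ℓ m M} L → (L : ℝ) = 2 * (m:ℝ) - M := by
    intro M m L h1 h2 hG
    have hL := sbpt_greatest_eq M m L h1 h2 hG
    have : (L : ℝ) = ((2 * m - M : ℕ) : ℝ) := by rw [hL]
    rw [this, Nat.cast_sub (by omega)]
    push_cast
    ring
  constructor
  · refine ⟨0, 0, fun M _ m h1 h2 L hG => ?_⟩
    rw [cast_eq M m L h1 h2 hG, sub_self, abs_zero]
  · intro δ hδ m hm hmm L hL
    have htend : Tendsto (fun M : ℕ => 2 * ((m M : ℝ) / M) - 1) atTop (nhds (2 * δ - 1)) :=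
      ((hm.const_mul 2).sub_const 1)
    refine htend.congr' ?_
    filter_upwards [hmm, hL, eventually_ge_atTop 1] with M hmm' hL' hM1
    have hc := cast_eq M (m M) (L M) hmm'.1 hmm'.2 hL'
    have hM0 : (M:ℝ) ≠ 0 := by
      have : (1:ℝ) ≤ M := by exact_mod_cast hM1
      linarith
    rw [hc]
    field_simp
end

section
/- Let M be a prime number and let K = {k_1,…,k_m} be m distinct integers in {0,…,M−1} with m ≤ M. Let A^(1) be the m×M complex matrix with entries A^(1)_{i,t} = exp(2πi k_i t / M) for 1 ≤ i ≤ m, 0 ≤ t < M. Then the M columns of A^(1) are in general position in ℂ^m: every subcollection of at most m columns of A^(1) is linearly independent over ℂ. -/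
open scoped BigOperators

namespace ChebAux

open Polynomial Finset

section Sub

variable {σ : Type*} [DecidableEq σ] {R : Type*} [CommRing R]

/-- Substituting `X j ↦ X i` changes a polynomial by a multiple of `X i - X j`. -/
lemma sub_dvd_sub_aeval (i j : σ) (f : MvPolynomial σ R) :
    (MvPolynomial.X i - MvPolynomial.X j : MvPolynomial σ R) ∣
      f - MvPolynomial.aeval (Function.update MvPolynomial.X j (MvPolynomial.X i)) f := by
  set φ : MvPolynomial σ R →ₐ[R] MvPolynomial σ R :=
    MvPolynomial.aeval (Function.update MvPolynomial.X j (MvPolynomial.X i)) with hφ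
  induction f using MvPolynomial.induction_on with
  | C a => simp [hφ]
  | add p q hp hq =>
      have : p + q - φ (p + q) = (p - φ p) + (q - φ q) := by rw [map_add]; ring
      rw [this]; exact dvd_add hp hq
  | mul_X p k hp =>
      have key : p * MvPolynomial.X k - φ (p * MvPolynomial.X k)
          = (p - φ p) * MvPolynomial.X k + (φ p) * (MvPolynomial.X k - φ (MvPolynomial.X k)) := by
        rw [map_mul]; ring
      rw [key]
      refine dvd_add (Dvd.dvd.mul_right hp _) (Dvd.dvd.mul_left ?_ _)
      rw [hφ, MvPolynomial.aeval_X]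
      rcases eq_or_ne k j with rfl | hkj
      · rw [Function.update_self]
        exact ⟨-1, by ring⟩
      · rw [Function.update_of_ne hkj]; simp

variable [IsDomain R]

lemma prime_X_sub_X {i j : σ} (hij : i ≠ j) :
    Prime (MvPolynomial.X i - MvPolynomial.X j : MvPolynomial σ R) := by
  let e1 : MvPolynomial σ R ≃ₐ[R] MvPolynomial (Option {b : σ // b ≠ j}) R :=
    MvPolynomial.renameEquiv R (Equiv.optionSubtypeNe j).symm
  let e2 : MvPolynomial (Option {b : σ // b ≠ j}) R ≃ₐ[R] Polynomial (MvPolynomial {b : σ // b ≠ j} R) :=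
    MvPolynomial.optionEquivLeft R {b : σ // b ≠ j}
  have h1 : e2 (e1 (MvPolynomial.X i - MvPolynomial.X j))
      = Polynomial.C (MvPolynomial.X ⟨i, hij⟩) - Polynomial.X := by
    rw [map_sub, map_sub]
    have hi : e1 (MvPolynomial.X i) = MvPolynomial.X ((Equiv.optionSubtypeNe j).symm i) := by
      simp [e1]
    have hj : e1 (MvPolynomial.X j) = MvPolynomial.X ((Equiv.optionSubtypeNe j).symm j) := by
      simp [e1]
    rw [hi, hj, Equiv.optionSubtypeNe_symm_self, Equiv.optionSubtypeNe_symm_of_ne hij]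
    rw [MvPolynomial.optionEquivLeft_X_some, MvPolynomial.optionEquivLeft_X_none]
  have hp : Prime (e2 (e1 (MvPolynomial.X i - MvPolynomial.X j))) := by
    rw [h1]
    have := (Polynomial.prime_X_sub_C (R := MvPolynomial {b : σ // b ≠ j} R)
      (MvPolynomial.X ⟨i, hij⟩)).neg
    simpa [neg_sub] using this
  exact (MulEquiv.prime_iff (e1.toRingEquiv.toMulEquiv.trans e2.toRingEquiv.toMulEquiv)).mp hp


end Sub

lemma prod_primes_dvd' {M : Type*} [CommMonoidWithZero M] [IsCancelMulZero M] {ι : Type*} [DecidableEq ι]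
    (s : Finset ι) (f : ι → M) :
    (∀ e ∈ s, Prime (f e)) →
    (∀ e ∈ s, ∀ e' ∈ s, e ≠ e' → ¬ Associated (f e) (f e')) →
    ∀ d : M, (∀ e ∈ s, f e ∣ d) → (∏ e ∈ s, f e) ∣ d := by
  induction s using Finset.induction_on with
  | empty => intro _ _ d _; simp
  | @insert a s ha ih =>
      intro hp hna d hdvd
      obtain ⟨d', rfl⟩ := hdvd a (Finset.mem_insert_self a s)
      rw [Finset.prod_insert ha]
      refine mul_dvd_mul_left (f a) (ih ?_ ?_ d' ?_)
      · exact fun e he => hp e (Finset.mem_insert_of_mem he)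
      · exact fun e he e' he' hne =>
          hna e (Finset.mem_insert_of_mem he) e' (Finset.mem_insert_of_mem he') hne
      · intro e he
        have hea : e ≠ a := fun h => ha (h ▸ he)
        have hd := hdvd e (Finset.mem_insert_of_mem he)
        rcases (hp e (Finset.mem_insert_of_mem he)).dvd_or_dvd hd with h1 | h1
        · exact absurd ((hp e (Finset.mem_insert_of_mem he)).associated_of_dvd
            (hp a (Finset.mem_insert_self a s)) h1)
            (hna e (Finset.mem_insert_of_mem he) a (Finset.mem_insert_self a s) hea)
        · exact h1

lemma eval_unit_contra {n : ℕ} {i j k l : Fin n} (hij : i ≠ j) (x : Fin n)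
    (hx : x = i ∨ x = j) (hxk : x ≠ k) (hxl : x ≠ l) :
    ¬ Associated (MvPolynomial.X j - MvPolynomial.X i : MvPolynomial (Fin n) ℤ)
      (MvPolynomial.X l - MvPolynomial.X k) := by
  rintro ⟨u, hu⟩
  have h := congrArg (MvPolynomial.eval (fun y : Fin n => if y = x then (1:ℤ) else 0)) hu
  rw [MvPolynomial.eval_mul, map_sub, map_sub, MvPolynomial.eval_X, MvPolynomial.eval_X,
    MvPolynomial.eval_X, MvPolynomial.eval_X] at h
  rw [if_neg (fun hh : l = x => hxl hh.symm), if_neg (fun hh : k = x => hxk hh.symm)] at h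
  have hunit : IsUnit (MvPolynomial.eval (fun y : Fin n => if y = x then (1:ℤ) else 0) ↑u) :=
    (MvPolynomial.eval _).isUnit_map u.isUnit
  have h0 : ((if j = x then (1:ℤ) else 0) - if i = x then (1:ℤ) else 0) ≠ 0 := by
    rcases hx with rfl | rfl
    · rw [if_neg (fun hh : j = x => hij hh.symm), if_pos rfl]; norm_num
    · rw [if_pos rfl, if_neg (fun hh : i = x => hij hh)]; norm_num
  rw [sub_self] at h
  exact (mul_ne_zero h0 hunit.ne_zero) h

lemma not_associated_X_sub_X {n : ℕ} {i j k l : Fin n} (hij : i < j) (hkl : k < l)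
    (hne : ¬ (i = k ∧ j = l)) :
    ¬ Associated (MvPolynomial.X j - MvPolynomial.X i : MvPolynomial (Fin n) ℤ)
      (MvPolynomial.X l - MvPolynomial.X k) := by
  by_cases hik : i = k
  · have hjl : j ≠ l := fun h => hne ⟨hik, h⟩
    have hjk : j ≠ k := fun h => absurd (hik ▸ h ▸ hij) (lt_irrefl _)
    exact eval_unit_contra hij.ne j (Or.inr rfl) hjk hjl
  · by_cases hil : i = l
    · exact eval_unit_contra hij.ne j (Or.inr rfl)
        (show j ≠ k from ((hil ▸ hkl : k < i).trans hij).ne')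
        (show j ≠ l from fun h => hij.ne (hil.trans h.symm))
    · exact eval_unit_contra hij.ne i (Or.inl rfl) hik hil

lemma X_sub_X_dvd_det {n : ℕ} (t : Fin n → ℕ) {i j : Fin n} (hij : i ≠ j) :
    (MvPolynomial.X j - MvPolynomial.X i : MvPolynomial (Fin n) ℤ) ∣
      (Matrix.of fun i' j' : Fin n => (MvPolynomial.X i' : MvPolynomial (Fin n) ℤ) ^ (t j')).det := by
  have h := sub_dvd_sub_aeval j i
    (Matrix.of fun i' j' : Fin n => (MvPolynomial.X i' : MvPolynomial (Fin n) ℤ) ^ (t j')).det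
  have h0 : MvPolynomial.aeval ((Function.update MvPolynomial.X i (MvPolynomial.X j)) :
        Fin n → MvPolynomial (Fin n) ℤ)
      (Matrix.of fun i' j' : Fin n => (MvPolynomial.X i' : MvPolynomial (Fin n) ℤ) ^ (t j')).det = 0 := by
    set φ : MvPolynomial (Fin n) ℤ →ₐ[ℤ] MvPolynomial (Fin n) ℤ :=
      MvPolynomial.aeval (Function.update MvPolynomial.X i (MvPolynomial.X j)) with hφ
    show φ _ = 0
    rw [← AlgHom.coe_toRingHom φ, RingHom.map_det]
    apply Matrix.det_zero_of_row_eq hij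
    funext c
    simp [hφ, Function.update_of_ne (Ne.symm hij)]
  rw [h0, sub_zero] at h
  exact h

lemma vandermonde_dvd_det (n : ℕ) (t : Fin n → ℕ) :
    (∏ i : Fin n, ∏ j ∈ Finset.Ioi i,
        (MvPolynomial.X j - MvPolynomial.X i : MvPolynomial (Fin n) ℤ)) ∣
      (Matrix.of fun i j : Fin n => (MvPolynomial.X i : MvPolynomial (Fin n) ℤ) ^ (t j)).det := by
  rw [← Finset.prod_sigma Finset.univ (fun i => Finset.Ioi i)
    (fun x : Σ _ : Fin n, Fin n => (MvPolynomial.X x.2 - MvPolynomial.X x.1 : MvPolynomial (Fin n) ℤ))]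
  apply prod_primes_dvd'
  · rintro ⟨a, b⟩ he
    rw [Finset.mem_sigma, Finset.mem_Ioi] at he
    exact prime_X_sub_X he.2.ne'
  · rintro ⟨a, b⟩ he ⟨c, d⟩ he' hne
    rw [Finset.mem_sigma, Finset.mem_Ioi] at he he'
    refine not_associated_X_sub_X he.2 he'.2 ?_
    rintro ⟨rfl, rfl⟩
    exact hne rfl
  · rintro ⟨a, b⟩ he
    rw [Finset.mem_sigma, Finset.mem_Ioi] at he
    exact X_sub_X_dvd_det t he.2.ne

lemma int_dvd_eval_one {p : ℕ} (hp : p.Prime) (P : Polynomial ℤ)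
    (h0 : Polynomial.aeval (Complex.exp (2 * Real.pi * Complex.I / p)) P = 0) :
    (p : ℤ) ∣ P.eval 1 := by
  haveI := Fact.mk hp
  set ζ : ℂ := Complex.exp (2 * Real.pi * Complex.I / p) with hζ
  have hprim : IsPrimitiveRoot ζ p := Complex.isPrimitiveRoot_exp p hp.ne_zero
  have hmin : Polynomial.cyclotomic p ℚ = minpoly ℚ ζ :=
    Polynomial.cyclotomic_eq_minpoly_rat hprim hp.pos
  have hzero : Polynomial.aeval ζ (P.map (algebraMap ℤ ℚ)) = 0 := by
    rw [Polynomial.aeval_map_algebraMap]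
    exact h0
  have hdvd : minpoly ℚ ζ ∣ P.map (algebraMap ℤ ℚ) := minpoly.dvd ℚ ζ hzero
  rw [← hmin, ← Polynomial.map_cyclotomic_int p ℚ] at hdvd
  have hdvdZ : Polynomial.cyclotomic p ℤ ∣ P := by
    have hmono : (Polynomial.cyclotomic p ℤ).Monic := Polynomial.cyclotomic.monic p ℤ
    rw [← Polynomial.map_dvd_map (Int.castRingHom ℚ) (fun x y h => by simpa using h) hmono]
    exact hdvd
  obtain ⟨h, rfl⟩ := hdvdZ
  rw [Polynomial.eval_mul, Polynomial.eval_one_cyclotomic_prime]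
  exact Dvd.intro _ rfl

lemma eval_one_aeval_pow {n : ℕ} (h : Fin n → ℕ) (Q : MvPolynomial (Fin n) ℤ) :
    ((MvPolynomial.aeval (fun i : Fin n => (Polynomial.X : Polynomial ℤ) ^ h i)) Q).eval 1
      = MvPolynomial.eval (fun _ : Fin n => (1:ℤ)) Q := by
  induction Q using MvPolynomial.induction_on with
  | C a => simp
  | add p q hp hq => simp [hp, hq]
  | mul_X p i hp => simp [hp]

theorem cheb_det_ne_zero (p n : ℕ) (hp : p.Prime) (hn : n ≤ p)
    (a t : Fin n → Fin p) (ha : Function.Injective a) (ht : Function.Injective t) :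
    (Matrix.of fun i j : Fin n =>
      Complex.exp (2 * Real.pi * Complex.I / p) ^ ((a i : ℕ) * (t j : ℕ))).det ≠ 0 := by
  set ζ : ℂ := Complex.exp (2 * Real.pi * Complex.I / p) with hζ
  have hprim : IsPrimitiveRoot ζ p := Complex.isPrimitiveRoot_exp p hp.ne_zero
  set D : MvPolynomial (Fin n) ℤ :=
    (Matrix.of fun i j : Fin n => (MvPolynomial.X i : MvPolynomial (Fin n) ℤ) ^ ((t j : ℕ))).det
    with hD
  set V : MvPolynomial (Fin n) ℤ :=
    ∏ i : Fin n, ∏ j ∈ Finset.Ioi i, (MvPolynomial.X j - MvPolynomial.X i) with hV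
  obtain ⟨Q, hQ⟩ := vandermonde_dvd_det n (fun j => (t j : ℕ))
  -- the two specializations to one variable
  set ψlin : MvPolynomial (Fin n) ℤ →ₐ[ℤ] Polynomial ℤ :=
    MvPolynomial.aeval (fun i : Fin n => (Polynomial.X : Polynomial ℤ) ^ (i : ℕ)) with hψlin
  -- compute ψlin D
  have hDlin : ψlin D = ∏ i : Fin n, ∏ j ∈ Finset.Ioi i,
      ((Polynomial.X : Polynomial ℤ) ^ (t j : ℕ) - (Polynomial.X : Polynomial ℤ) ^ (t i : ℕ)) := by
    rw [hD, AlgHom.map_det]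
    have hmat : ψlin.mapMatrix (Matrix.of fun i j : Fin n =>
          (MvPolynomial.X i : MvPolynomial (Fin n) ℤ) ^ ((t j : ℕ)))
        = (Matrix.vandermonde fun j : Fin n => (Polynomial.X : Polynomial ℤ) ^ (t j : ℕ)).transpose := by
      funext i j
      rw [AlgHom.mapMatrix_apply, Matrix.map_apply, Matrix.transpose_apply,
        Matrix.vandermonde_apply, Matrix.of_apply,
        map_pow, hψlin, MvPolynomial.aeval_X, ← pow_mul, ← pow_mul, mul_comm]
    rw [hmat, Matrix.det_transpose, Matrix.det_vandermonde]
  -- compute ψlin V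
  have hVlin : ψlin V = ∏ i : Fin n, ∏ j ∈ Finset.Ioi i,
      ((Polynomial.X : Polynomial ℤ) ^ (j : ℕ) - (Polynomial.X : Polynomial ℤ) ^ (i : ℕ)) := by
    rw [hV, map_prod]
    refine Finset.prod_congr rfl fun i _ => ?_
    rw [map_prod]
    exact Finset.prod_congr rfl fun j _ => by rw [map_sub, hψlin, MvPolynomial.aeval_X,
      MvPolynomial.aeval_X]
  -- geometric sums
  set G : ℕ → Polynomial ℤ := fun k => ∑ i ∈ Finset.range k, Polynomial.X ^ i with hGdef
  have hG : ∀ u v : ℕ, (Polynomial.X : Polynomial ℤ) ^ u - Polynomial.X ^ v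
      = (Polynomial.X - 1) * (G u - G v) := by
    intro u v
    have h1 := geom_sum_mul (Polynomial.X : Polynomial ℤ) u
    have h2 := geom_sum_mul (Polynomial.X : Polynomial ℤ) v
    have h3 : (G u - G v) * (Polynomial.X - 1) = Polynomial.X ^ u - Polynomial.X ^ v := by
      rw [hGdef, sub_mul, h1, h2]; ring
    rw [mul_comm]
    exact h3.symm
  set N : ℕ := ∑ i : Fin n, (Finset.Ioi i).card with hN
  have hfactor : ∀ f : Fin n → ℕ,
      (∏ i : Fin n, ∏ j ∈ Finset.Ioi i,
        ((Polynomial.X : Polynomial ℤ) ^ (f j) - Polynomial.X ^ (f i)))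
      = (Polynomial.X - 1) ^ N * ∏ i : Fin n, ∏ j ∈ Finset.Ioi i, (G (f j) - G (f i)) := by
    intro f
    rw [hN, ← Finset.prod_pow_eq_pow_sum, ← Finset.prod_mul_distrib]
    refine Finset.prod_congr rfl fun i _ => ?_
    rw [← Finset.prod_const, ← Finset.prod_mul_distrib]
    exact Finset.prod_congr rfl fun j _ => hG (f j) (f i)
  -- main polynomial identity after cancellation
  have hXone : ((Polynomial.X : Polynomial ℤ) - 1) ^ N ≠ 0 :=
    pow_ne_zero _ (Polynomial.X_sub_C_ne_zero 1)
  have hmain : (∏ i : Fin n, ∏ j ∈ Finset.Ioi i, (G (j : ℕ) - G (i : ℕ))) * ψlin Q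
      = ∏ i : Fin n, ∏ j ∈ Finset.Ioi i, (G (t j : ℕ) - G (t i : ℕ)) := by
    have h := congrArg ψlin hQ
    rw [map_mul, hDlin, hVlin, hfactor (fun i => (i : ℕ)), hfactor (fun i => (t i : ℕ))] at h
    apply mul_left_cancel₀ hXone
    linear_combination -h
  -- evaluate at 1
  have hGeval : ∀ k : ℕ, (G k).eval 1 = (k : ℤ) := by
    intro k; rw [hGdef]; simp [Polynomial.eval_finset_sum]
  have hnum : (∏ i : Fin n, ∏ j ∈ Finset.Ioi i, ((j : ℤ) - (i : ℤ))) * (ψlin Q).eval 1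
      = ∏ i : Fin n, ∏ j ∈ Finset.Ioi i, (((t j : ℕ) : ℤ) - ((t i : ℕ) : ℤ)) := by
    have h := congrArg (Polynomial.eval (1 : ℤ)) hmain
    rw [Polynomial.eval_mul, Polynomial.eval_prod] at h
    rw [Polynomial.eval_prod] at h
    simp only [Polynomial.eval_prod, Polynomial.eval_sub, hGeval] at h
    exact h
  -- p does not divide the RHS nor LHS factors
  have hpZ : Prime (p : ℤ) := by
    rw [Int.prime_iff_natAbs_prime]
    simpa using hp
  have hfac : ∀ (u v : ℕ), u < p → v < p → u ≠ v → ¬ (p : ℤ) ∣ ((u : ℤ) - (v : ℤ)) := by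
    intro u v hu hv huv hdvd
    have h0 : ((u : ℤ) - v) = 0 := by
      refine Int.eq_zero_of_abs_lt_dvd hdvd ?_
      rw [abs_sub_lt_iff]
      constructor <;> push_cast <;> omega
    have : u = v := by omega
    exact huv this
  have hRHS : ¬ (p : ℤ) ∣ ∏ i : Fin n, ∏ j ∈ Finset.Ioi i, (((t j : ℕ) : ℤ) - ((t i : ℕ) : ℤ)) := by
    intro hdvd
    rw [Prime.dvd_finset_prod_iff hpZ] at hdvd
    obtain ⟨i, _, hdvd⟩ := hdvd
    rw [Prime.dvd_finset_prod_iff hpZ] at hdvd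
    obtain ⟨j, hj, hdvd⟩ := hdvd
    rw [Finset.mem_Ioi] at hj
    exact hfac _ _ (t j).2 (t i).2 (fun h => hj.ne' (ht (Fin.val_injective h))) hdvd
  -- hence p does not divide the evaluation of Q at 1
  have hndvd : ¬ (p : ℤ) ∣ (ψlin Q).eval 1 := by
    intro hdvd
    exact hRHS (hnum ▸ Dvd.dvd.mul_left hdvd _)
  -- now the complex side
  intro hcon
  set Φ : MvPolynomial (Fin n) ℤ →ₐ[ℤ] ℂ :=
    MvPolynomial.aeval (fun i : Fin n => ζ ^ (a i : ℕ)) with hΦ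
  have hΦD : Φ D = (Matrix.of fun i j : Fin n => ζ ^ ((a i : ℕ) * (t j : ℕ))).det := by
    rw [hD, AlgHom.map_det]
    congr 1
    funext i j
    rw [AlgHom.mapMatrix_apply, Matrix.map_apply, Matrix.of_apply, Matrix.of_apply, map_pow, hΦ,
      MvPolynomial.aeval_X, ← pow_mul]
  have hΦV : Φ V ≠ 0 := by
    rw [hV, map_prod]
    rw [Finset.prod_ne_zero_iff]
    intro i _
    rw [map_prod, Finset.prod_ne_zero_iff]
    intro j hj
    rw [Finset.mem_Ioi] at hj
    rw [map_sub, hΦ, MvPolynomial.aeval_X, MvPolynomial.aeval_X, sub_ne_zero]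
    intro heq
    have := hprim.pow_inj (a j).2 (a i).2 heq
    exact hj.ne' (ha (Fin.val_injective this))
  have hΦQ : Φ Q = 0 := by
    have h := congrArg Φ hQ
    rw [map_mul, hΦD, hcon] at h
    rcases mul_eq_zero.mp h.symm with h1 | h1
    · exact absurd h1 hΦV
    · exact h1
  -- transfer to single-variable polynomial
  set ψa : MvPolynomial (Fin n) ℤ →ₐ[ℤ] Polynomial ℤ :=
    MvPolynomial.aeval (fun i : Fin n => (Polynomial.X : Polynomial ℤ) ^ (a i : ℕ)) with hψa
  have hcomp : (Polynomial.aeval ζ).comp ψa = Φ := by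
    apply MvPolynomial.algHom_ext
    intro i
    rw [AlgHom.comp_apply, hψa, MvPolynomial.aeval_X, map_pow, Polynomial.aeval_X, hΦ,
      MvPolynomial.aeval_X]
  have haeval : Polynomial.aeval ζ (ψa Q) = 0 := by
    rw [← AlgHom.comp_apply, hcomp, hΦQ]
  have hdvd1 : (p : ℤ) ∣ (ψa Q).eval 1 := int_dvd_eval_one hp (ψa Q) haeval
  rw [hψa, eval_one_aeval_pow] at hdvd1
  rw [hψlin, eval_one_aeval_pow] at hndvd
  exact hndvd hdvd1

end ChebAux

/-- Tao's uncertainty principle consequence: for `M` prime, the columns of the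
partial DFT matrix `A⁽¹⁾_{i,t} = exp(2πi k_i t / M)` (rows selected by distinct
frequencies `k_1,…,k_m`) are in general position in `ℂ^m`: every subcollection of at
most `m` columns is linearly independent over `ℂ`. -/
theorem partialDFT_columns_general_position
    (M m : ℕ) (hM : Nat.Prime M) (hm : m ≤ M)
    (k : Fin m → Fin M) (hk : Function.Injective k) :
    ∀ s : Finset (Fin M), s.card ≤ m →
      LinearIndependent ℂ (fun t : s => fun i : Fin m =>
        Complex.exp (2 * Real.pi * Complex.I * (k i : ℕ) * ((t : Fin M) : ℕ) / M)) := by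
  intro s hs
  set ζ : ℂ := Complex.exp (2 * Real.pi * Complex.I / M) with hζ
  have hexp : ∀ (i : Fin m) (τ : Fin M),
      Complex.exp (2 * Real.pi * Complex.I * (k i : ℕ) * (τ : ℕ) / M)
        = ζ ^ ((k i : ℕ) * (τ : ℕ)) := by
    intro i τ
    rw [hζ, ← Complex.exp_nat_mul]
    congr 1
    push_cast
    ring
  have hnm : s.card ≤ m := hs
  rw [← linearIndependent_equiv (s.equivFin.symm)]
  set a : Fin s.card → Fin M := fun i => k (Fin.castLE hnm i) with ha_def
  set tt : Fin s.card → Fin M := fun j => ((s.equivFin.symm j : s) : Fin M) with htt_def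
  have ha : Function.Injective a := fun x y h => Fin.castLE_injective hnm (hk h)
  have htinj : Function.Injective tt := by
    intro x y h
    exact s.equivFin.symm.injective (Subtype.ext h)
  have hdet := ChebAux.cheb_det_ne_zero M s.card hM (hnm.trans hm) a tt ha htinj
  have hunit : IsUnit (Matrix.of fun i j : Fin s.card => ζ ^ ((a i : ℕ) * (tt j : ℕ))) := by
    rw [Matrix.isUnit_iff_isUnit_det, isUnit_iff_ne_zero]
    exact hdet
  have hcols := Matrix.linearIndependent_cols_iff_isUnit.mpr hunit
  apply LinearIndependent.of_comp (LinearMap.funLeft ℂ ℂ (Fin.castLE hnm))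
  have hfam : (⇑(LinearMap.funLeft ℂ ℂ (Fin.castLE hnm)) ∘
      ((fun t : s => fun i : Fin m =>
        Complex.exp (2 * Real.pi * Complex.I * (k i : ℕ) * ((t : Fin M) : ℕ) / M))
        ∘ ⇑s.equivFin.symm))
      = fun j => (Matrix.of fun i j' : Fin s.card =>
          ζ ^ ((a i : ℕ) * (tt j' : ℕ))).transpose j := by
    funext j i
    simp only [Function.comp_apply, LinearMap.funLeft_apply, Matrix.transpose_apply,
      Matrix.of_apply]
    exact hexp (Fin.castLE hnm i) (tt j)
  rw [hfam]
  exact hcols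
end
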